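/- If a group G acts geometrically (properly, cocompactly, by isometries) on a contractible proper metric space X, then X is uniformly contractible: for each R > 0 there exists S > R such that every open ball B(x,R) is null-homotopic inside B(x,S). -/
import Mathlib


open Pointwise

/-- If `G` acts geometrically (properly, cocompactly, by isometries) on a contractible
proper metric space `X`, then `X` is uniformly contractible: for each `R > 0` there is
`S > R` such that every ball `B(x,R)` is null-homotopic in `B(x,S)`. -/
theorem stmt12 {G X : Type*} [Group G] [MetricSpace X] [MulAction G X]
    (hiso : ∀ (g : G) (x y : X), dist (g • x) (g • y) = dist x y)
    (hproperX : ∀ (x : X) (r : ℝ), IsCompact (Metric.closedBall x r))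
    (hcocompact : ∃ K : Set X, IsCompact K ∧ ⋃ g : G, g • K = Set.univ)
    (hproper : ∀ K : Set X, IsCompact K → {g : G | (g • K ∩ K).Nonempty}.Finite)
    (hcontr : ContractibleSpace X) :
    ∀ R > (0 : ℝ), ∃ S : ℝ, ∃ hRS : R < S, ∀ x : X,
      ∃ c : Metric.ball x S,
        ContinuousMap.Homotopic
          ⟨Set.inclusion (Metric.ball_subset_ball hRS.le),
            continuous_inclusion (Metric.ball_subset_ball hRS.le)⟩
          (ContinuousMap.const (Metric.ball x R) c) := by
  haveI : ProperSpace X := ⟨hproperX⟩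
  obtain ⟨y₀, ⟨H⟩⟩ := id_nullhomotopic X
  obtain ⟨K, hK, hKcov⟩ := hcocompact
  -- K is nonempty
  have hy₀ : y₀ ∈ ⋃ g : G, g • K := hKcov ▸ Set.mem_univ y₀
  obtain ⟨s, ⟨g₀, rfl⟩, hg₀⟩ := hy₀
  obtain ⟨k₀, hk₀K, _⟩ := hg₀
  -- isometry of each g-action
  have hisoI : ∀ g : G, Isometry (fun y : X => g • y) := fun g =>
    Isometry.of_dist_eq (fun a b => hiso g a b)
  intro R hR
  -- thickened compact set and its image under the contraction
  set K' : Set X := Metric.cthickening (R + 1) K with hK'def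
  have hK' : IsCompact K' := hK.cthickening
  have hA : IsCompact (H '' (Set.univ ×ˢ K')) :=
    (isCompact_univ.prod hK').image H.continuous
  obtain ⟨M, hM⟩ := hA.isBounded.subset_closedBall k₀
  obtain ⟨D, hD⟩ := hK.isBounded.subset_closedBall k₀
  have hD0 : 0 ≤ D := le_trans dist_nonneg (hD hk₀K)
  -- bound for points of K' image relative to any k ∈ K
  have key : ∀ k ∈ K, ∀ t : unitInterval, ∀ q ∈ K', dist (H (t, q)) k ≤ M + D := by
    intro k hk t q hq
    have h1 : H (t, q) ∈ Metric.closedBall k₀ M :=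
      hM ⟨(t, q), ⟨Set.mem_univ _, hq⟩, rfl⟩
    calc dist (H (t, q)) k ≤ dist (H (t, q)) k₀ + dist k₀ k := dist_triangle _ _ _
      _ ≤ M + D := add_le_add h1 (by simpa [dist_comm] using hD hk)
  refine ⟨max (M + D) R + 1, lt_of_le_of_lt (le_max_right _ _) (lt_add_one _), ?_⟩
  set S : ℝ := max (M + D) R + 1 with hSdef
  intro x
  obtain ⟨s, ⟨g, rfl⟩, hx⟩ : x ∈ ⋃ g : G, g • K := hKcov ▸ Set.mem_univ x
  obtain ⟨k, hkK, hgk⟩ := hx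
  have hxk : x = g • k := hgk.symm
  have hkK' : k ∈ K' := Metric.self_subset_cthickening K hkK
  -- distance transport
  have hdist : ∀ a : X, dist (g • a) x = dist a k := by
    intro a; rw [hxk, hiso]
  -- membership of the translated contraction images
  have hmem : ∀ t : unitInterval, ∀ q ∈ K', g • H (t, q) ∈ Metric.ball x S := by
    intro t q hq
    rw [Metric.mem_ball, hdist]
    calc dist (H (t, q)) k ≤ M + D := key k hkK t q hq
      _ < S := lt_of_le_of_lt (le_max_left _ _) (lt_add_one _)
  -- pulled-back points of the small ball lie in K'
  have hpull : ∀ p : Metric.ball x R, g⁻¹ • (p : X) ∈ K' := by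
    intro p
    have hp : dist (g⁻¹ • (p : X)) k ≤ R + 1 := by
      have : dist (g • (g⁻¹ • (p : X))) x = dist (g⁻¹ • (p : X)) k := hdist _
      rw [smul_inv_smul] at this
      rw [← this]
      exact le_trans (le_of_lt (Metric.mem_ball.mp p.2)) (le_add_of_nonneg_right zero_le_one)
    exact Metric.mem_cthickening_of_dist_le _ k _ K hkK hp
  -- the center
  have hcmem : g • y₀ ∈ Metric.ball x S := by
    have : y₀ = H (1, k) := (H.apply_one k).symm
    rw [this]; exact hmem 1 k hkK'
  refine ⟨⟨g • y₀, hcmem⟩, ?_⟩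
  -- build the homotopy
  refine ⟨{
    toFun := fun tp =>
      ⟨g • H (tp.1, g⁻¹ • (tp.2 : X)), hmem tp.1 _ (hpull tp.2)⟩
    continuous_toFun := by
      apply Continuous.subtype_mk
      exact (hisoI g).continuous.comp (H.continuous.comp
        (continuous_fst.prodMk ((hisoI g⁻¹).continuous.comp
          (continuous_subtype_val.comp continuous_snd))))
    map_zero_left := ?_
    map_one_left := ?_ }⟩
  · intro p
    apply Subtype.ext
    show g • H (0, g⁻¹ • (p : X)) = (p : X)
    rw [H.apply_zero, ContinuousMap.id_apply, smul_inv_smul]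
  · intro p
    apply Subtype.ext
    show g • H (1, g⁻¹ • (p : X)) = g • y₀
    rw [H.apply_one]; rfl
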